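/- Every minimal non-sofic group G has a maximal normal subgroup M such that the quotient G/M is a finitely generated infinite simple group. -/

import Mathlib

/-- The normalized Hamming distance between two permutations of `Fin n`:
the number of points where they differ, divided by `n`. -/
noncomputable def permHammingDist {n : ℕ} (σ τ : Equiv.Perm (Fin n)) : ℝ :=
  ((Finset.univ.filter fun i => σ i ≠ τ i).card : ℝ) / n

/-- A group `G` is sofic if for every finite subset `F ⊆ G` and every `ε > 0` there exist
`n ≥ 1` and a map `θ` from `F` to `Sym(Fin n)` (extended to all of `G`) such that:
(i) `θ` is an `ε`-approximate homomorphism on `F`;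
(ii) `θ` almost sends the identity to the identity;
(iii) distinct elements of `F` are sent to permutations at Hamming distance at least `1/4`. -/
def IsSofic (G : Type*) [Group G] : Prop :=
  ∀ (F : Finset G) (ε : ℝ), 0 < ε →
    ∃ n : ℕ, 1 ≤ n ∧ ∃ θ : G → Equiv.Perm (Fin n),
      (∀ g h : G, g ∈ F → h ∈ F → g * h ∈ F →
        permHammingDist (θ g * θ h) (θ (g * h)) < ε) ∧
      ((1 : G) ∈ F → permHammingDist (θ 1) 1 < ε) ∧
      (∀ x y : G, x ∈ F → y ∈ F → x ≠ y → 1 / 4 ≤ permHammingDist (θ x) (θ y))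


open Finset

lemma permHammingDist_self {n : ℕ} (σ : Equiv.Perm (Fin n)) : permHammingDist σ σ = 0 := by
  simp [permHammingDist]

lemma isSofic_of_finite (G : Type*) [Group G] [Finite G] : IsSofic G := by
  intro F ε hε
  have : Nonempty G := ⟨1⟩
  cases nonempty_fintype G
  classical
  refine ⟨Fintype.card G, Fintype.card_pos, ?_⟩
  set n := Fintype.card G with hn
  set e : G ≃ Fin n := Fintype.equivFin G with he
  set θ : G → Equiv.Perm (Fin n) := fun g => e.permCongr (Equiv.mulLeft g) with hθ
  have hmul : ∀ g h : G, θ g * θ h = θ (g * h) := by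
    intro g h
    ext i
    simp [hθ, Equiv.permCongr_apply, Equiv.Perm.mul_apply, mul_assoc]
  have hone : θ 1 = 1 := by
    ext i
    simp [hθ, Equiv.permCongr_apply]
  refine ⟨θ, fun g h _ _ _ => by rw [hmul]; simpa [permHammingDist_self] using hε,
    fun _ => by rw [hone]; simpa [permHammingDist_self] using hε, ?_⟩
  intro x y _ _ hxy
  have hfilter : (Finset.univ.filter fun i => θ x i ≠ θ y i) = Finset.univ := by
    ext i
    simp only [mem_filter, mem_univ, true_and, iff_true, hθ, Equiv.permCongr_apply,
      Equiv.coe_mulLeft]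
    exact fun h => hxy (mul_right_cancel (e.injective h))
  have hn0 : (0 : ℝ) < n := by
    have : 0 < n := Fintype.card_pos
    exact_mod_cast this
  show (1:ℝ)/4 ≤ permHammingDist (θ x) (θ y)
  unfold permHammingDist
  rw [hfilter, Finset.card_univ, Fintype.card_fin, div_self (ne_of_gt hn0)]
  norm_num

lemma sofic_cond_of_subgroup {G : Type*} [Group G] (H : Subgroup G) (hH : IsSofic H)
    (F : Finset G) (hF : ∀ g ∈ F, g ∈ H) (ε : ℝ) (hε : 0 < ε) :
    ∃ n : ℕ, 1 ≤ n ∧ ∃ θ : G → Equiv.Perm (Fin n),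
      (∀ g h : G, g ∈ F → h ∈ F → g * h ∈ F →
        permHammingDist (θ g * θ h) (θ (g * h)) < ε) ∧
      ((1 : G) ∈ F → permHammingDist (θ 1) 1 < ε) ∧
      (∀ x y : G, x ∈ F → y ∈ F → x ≠ y → 1 / 4 ≤ permHammingDist (θ x) (θ y)) := by
  classical
  set FM : Finset H := F.attach.image (fun x : {g // g ∈ F} => (⟨x.1, hF x.1 x.2⟩ : H)) with hFM
  obtain ⟨n, hn, θH, h1, h2, h3⟩ := hH FM ε hε
  have hmem : ∀ g (hg : g ∈ F), (⟨g, hF g hg⟩ : H) ∈ FM := by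
    intro g hg
    exact Finset.mem_image.2 ⟨⟨g, hg⟩, Finset.mem_attach _ _, rfl⟩
  refine ⟨n, hn, fun g => if h : g ∈ H then θH ⟨g, h⟩ else 1, ?_, ?_, ?_⟩
  · intro g h hg hh hgh
    beta_reduce
    rw [dif_pos (hF g hg), dif_pos (hF h hh), dif_pos (hF _ hgh)]
    have e3 : (⟨g, hF g hg⟩ : H) * ⟨h, hF h hh⟩ = ⟨g * h, hF _ hgh⟩ := rfl
    have := h1 ⟨g, hF g hg⟩ ⟨h, hF h hh⟩ (hmem g hg) (hmem h hh) (e3 ▸ hmem _ hgh)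
    rwa [e3] at this
  · intro h1F
    beta_reduce
    rw [dif_pos H.one_mem]
    have e1 : (⟨(1:G), H.one_mem⟩ : H) = 1 := rfl
    rw [e1]
    exact h2 (e1 ▸ hmem _ h1F)
  · intro x y hx hy hxy
    beta_reduce
    rw [dif_pos (hF x hx), dif_pos (hF y hy)]
    exact h3 _ _ (hmem x hx) (hmem y hy) fun h => hxy (congrArg Subtype.val h)

namespace SoficAux

variable {G : Type*} [Group G] (M : Subgroup G) [M.Normal]

lemma sec_mem (q : G ⧸ M) (g : G) :
    ((QuotientGroup.mk g * q : G ⧸ M).out)⁻¹ * g * q.out ∈ M := by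
  rw [← QuotientGroup.eq_one_iff]
  have h1 : (QuotientGroup.mk ((QuotientGroup.mk g * q : G ⧸ M).out) : G ⧸ M)
      = QuotientGroup.mk g * q := QuotientGroup.out_eq' _
  have h2 : (QuotientGroup.mk (q.out) : G ⧸ M) = q := QuotientGroup.out_eq' _
  rw [QuotientGroup.mk_mul, QuotientGroup.mk_mul, QuotientGroup.mk_inv, h1, h2]
  group

/-- The cocycle `σ_q(g) = s(ḡq)⁻¹ g s(q) ∈ M`. -/
noncomputable def coc (q : G ⧸ M) (g : G) : M :=
  ⟨((QuotientGroup.mk g * q : G ⧸ M).out)⁻¹ * g * q.out, sec_mem M q g⟩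

lemma coc_coe (q : G ⧸ M) (g : G) :
    (coc M q g : G) = ((QuotientGroup.mk g * q : G ⧸ M).out)⁻¹ * g * q.out := rfl

lemma coc_mul (q : G ⧸ M) (g h : G) :
    coc M (QuotientGroup.mk h * q) g * coc M q h = coc M q (g * h) := by
  apply Subtype.ext
  push_cast [coc_coe]
  have harg : (QuotientGroup.mk (g * h) * q : G ⧸ M)
      = QuotientGroup.mk g * (QuotientGroup.mk h * q) := by
    rw [QuotientGroup.mk_mul, mul_assoc]
  rw [harg]
  group

lemma coc_one (q : G ⧸ M) : coc M q 1 = 1 := by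
  apply Subtype.ext
  rw [coc_coe]
  have : (QuotientGroup.mk (1:G) * q : G ⧸ M) = q := by
    rw [QuotientGroup.mk_one, one_mul]
  rw [this]
  simp

lemma coc_inj {q : G ⧸ M} {x y : G} (hxy : (QuotientGroup.mk x : G ⧸ M) = QuotientGroup.mk y)
    (h : coc M q x = coc M q y) : x = y := by
  have := congrArg (Subtype.val) h
  rw [coc_coe, coc_coe, hxy] at this
  exact mul_left_cancel (mul_right_cancel this)

/-- The skew-product permutation on `(G ⧸ M) × Fin n` induced by `g` and `θ`. -/
noncomputable def skew {n : ℕ} (θ : M → Equiv.Perm (Fin n)) (g : G) : Equiv.Perm ((G ⧸ M) × Fin n) :=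
  Equiv.prodShear (Equiv.mulLeft (QuotientGroup.mk g)) (fun q => θ (coc M q g))

@[simp] lemma skew_apply {n : ℕ} (θ : M → Equiv.Perm (Fin n)) (g : G) (q : G ⧸ M) (i : Fin n) :
    skew M θ g (q, i) = (QuotientGroup.mk g * q, θ (coc M q g) i) := rfl

end SoficAux

lemma permCongr_mul {α : Type*} {m : ℕ} (e : α ≃ Fin m) (a b : Equiv.Perm α) :
    e.permCongr (a * b) = e.permCongr a * e.permCongr b := by
  ext i
  simp [Equiv.permCongr_apply, Equiv.Perm.mul_apply]

lemma permCongr_one {α : Type*} {m : ℕ} (e : α ≃ Fin m) :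
    e.permCongr (1 : Equiv.Perm α) = 1 := by
  ext i; simp

lemma card_ne_permCongr {α : Type*} [Fintype α] [DecidableEq α] {m : ℕ} (e : α ≃ Fin m)
    (a b : Equiv.Perm α) :
    (Finset.univ.filter fun i => e.permCongr a i ≠ e.permCongr b i).card
      = (Finset.univ.filter fun x => a x ≠ b x).card := by
  apply Finset.card_bij (fun (i : Fin m) _ => e.symm i)
  · intro i hi
    simp only [Finset.mem_filter, Finset.mem_univ, true_and, Equiv.permCongr_apply] at hi ⊢
    exact fun h => (Finset.mem_filter.mp hi).2 (congrArg e h)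
  · intro i _ j _ h
    exact e.symm.injective h
  · intro x hx
    simp only [Finset.mem_filter, Finset.mem_univ, true_and] at hx
    refine ⟨e x, ?_, by simp⟩
    simp only [Finset.mem_filter, Finset.mem_univ, true_and, Equiv.permCongr_apply,
      Equiv.symm_apply_apply]
    exact Finset.mem_filter.mpr ⟨Finset.mem_univ _, by
      simp only [Equiv.symm_apply_apply]; exact fun h => hx (e.injective h)⟩

lemma card_filter_prod {α β : Type*} [Fintype α] [Fintype β] (p : α → β → Prop)
    [∀ a b, Decidable (p a b)] :
    (Finset.univ.filter fun x : α × β => p x.1 x.2).card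
      = ∑ a : α, (Finset.univ.filter fun b => p a b).card := by
  rw [Finset.card_filter, Fintype.sum_prod_type]
  exact Finset.sum_congr rfl fun a _ => (Finset.card_filter _ _).symm

lemma isSofic_of_normal_finite_quotient {G : Type*} [Group G] (M : Subgroup G) [M.Normal]
    (hM : IsSofic M) (hfin : Finite (G ⧸ M)) : IsSofic G := by
  classical
  cases nonempty_fintype (G ⧸ M)
  intro F ε hε
  set FM : Finset M :=
    insert (1 : M) ((Finset.univ ×ˢ F).image fun p : (G ⧸ M) × G => SoficAux.coc M p.1 p.2)
    with hFMdef
  obtain ⟨n, hn, θ, h1, h2, h3⟩ := hM FM ε hε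
  have hmem : ∀ (q : G ⧸ M) (g : G), g ∈ F → SoficAux.coc M q g ∈ FM := by
    intro q g hg
    exact Finset.mem_insert_of_mem (Finset.mem_image.2 ⟨(q, g),
      Finset.mem_product.2 ⟨Finset.mem_univ _, hg⟩, rfl⟩)
  set k := Fintype.card (G ⧸ M) with hk
  set m := Fintype.card ((G ⧸ M) × Fin n) with hmdef
  have hkpos : 0 < k := Fintype.card_pos
  have hm : m = k * n := by rw [hmdef, Fintype.card_prod, Fintype.card_fin]
  have hmpos : 1 ≤ m := by rw [hm]; exact Nat.mul_pos hkpos hn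
  have hn0 : (0 : ℝ) < n := by exact_mod_cast Nat.lt_of_lt_of_le Nat.zero_lt_one hn
  have hm0 : (0 : ℝ) < m := by exact_mod_cast hmpos
  set e : ((G ⧸ M) × Fin n) ≃ Fin m := Fintype.equivFin _ with he
  have hdist : ∀ A B : Equiv.Perm ((G ⧸ M) × Fin n),
      permHammingDist (e.permCongr A) (e.permCongr B)
        = ((Finset.univ.filter fun x => A x ≠ B x).card : ℝ) / m := by
    intro A B
    unfold permHammingDist
    rw [card_ne_permCongr]
  refine ⟨m, hmpos, fun g => e.permCongr (SoficAux.skew M θ g), ?_, ?_, ?_⟩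
  · -- approximate multiplicativity
    intro g h hg hh hgh
    beta_reduce
    rw [← permCongr_mul, hdist, div_lt_iff₀ hm0]
    have hpt : ∀ x : (G ⧸ M) × Fin n,
        ((SoficAux.skew M θ g * SoficAux.skew M θ h) x ≠ SoficAux.skew M θ (g * h) x)
          ↔ ((θ (SoficAux.coc M (QuotientGroup.mk h * x.1) g) * θ (SoficAux.coc M x.1 h)) x.2
              ≠ θ (SoficAux.coc M x.1 (g * h)) x.2) := by
      rintro ⟨q, i⟩
      simp [Equiv.Perm.mul_apply, SoficAux.skew_apply, QuotientGroup.mk_mul,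
        Prod.ext_iff, mul_assoc]
    have hcount : (Finset.univ.filter fun x : (G ⧸ M) × Fin n =>
        (SoficAux.skew M θ g * SoficAux.skew M θ h) x ≠ SoficAux.skew M θ (g * h) x).card
      = ∑ q : G ⧸ M, (Finset.univ.filter fun i : Fin n =>
          (θ (SoficAux.coc M (QuotientGroup.mk h * q) g) * θ (SoficAux.coc M q h)) i
            ≠ θ (SoficAux.coc M q (g * h)) i).card := by
      rw [← card_filter_prod (fun (q : G ⧸ M) (i : Fin n) =>
        (θ (SoficAux.coc M (QuotientGroup.mk h * q) g) * θ (SoficAux.coc M q h)) i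
          ≠ θ (SoficAux.coc M q (g * h)) i)]
      congr 1
      apply Finset.filter_congr
      intro x _
      exact hpt x
    have hq : ∀ q : G ⧸ M, ((Finset.univ.filter fun i : Fin n =>
        (θ (SoficAux.coc M (QuotientGroup.mk h * q) g) * θ (SoficAux.coc M q h)) i
          ≠ θ (SoficAux.coc M q (g * h)) i).card : ℝ) < ε * n := by
      intro q
      have hprod := h1 (SoficAux.coc M (QuotientGroup.mk h * q) g) (SoficAux.coc M q h)
        (hmem _ _ hg) (hmem _ _ hh) (by rw [SoficAux.coc_mul]; exact hmem _ _ hgh)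
      rw [SoficAux.coc_mul] at hprod
      unfold permHammingDist at hprod
      exact (div_lt_iff₀ hn0).mp hprod
    calc ((Finset.univ.filter fun x : (G ⧸ M) × Fin n =>
        (SoficAux.skew M θ g * SoficAux.skew M θ h) x ≠ SoficAux.skew M θ (g * h) x).card : ℝ)
        = ∑ q : G ⧸ M, ((Finset.univ.filter fun i : Fin n =>
          (θ (SoficAux.coc M (QuotientGroup.mk h * q) g) * θ (SoficAux.coc M q h)) i
            ≠ θ (SoficAux.coc M q (g * h)) i).card : ℝ) := by
          rw [hcount]; push_cast; ring
      _ < ∑ _q : G ⧸ M, ε * n :=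
          Finset.sum_lt_sum_of_nonempty Finset.univ_nonempty (fun q _ => hq q)
      _ = ε * m := by
          rw [Finset.sum_const, Finset.card_univ, nsmul_eq_mul, hm]
          push_cast
          ring
  · -- identity
    intro h1F
    beta_reduce
    rw [show (1 : Equiv.Perm (Fin m)) = e.permCongr 1 from (permCongr_one e).symm,
      hdist, div_lt_iff₀ hm0]
    have hpt : ∀ x : (G ⧸ M) × Fin n,
        (SoficAux.skew M θ 1 x ≠ (1 : Equiv.Perm ((G ⧸ M) × Fin n)) x)
          ↔ (θ (1 : M) x.2 ≠ (1 : Equiv.Perm (Fin n)) x.2) := by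
      rintro ⟨q, i⟩
      simp [SoficAux.skew_apply, SoficAux.coc_one, Prod.ext_iff]
    have hcount : (Finset.univ.filter fun x : (G ⧸ M) × Fin n =>
        SoficAux.skew M θ 1 x ≠ (1 : Equiv.Perm ((G ⧸ M) × Fin n)) x).card
      = ∑ _q : G ⧸ M, (Finset.univ.filter fun i : Fin n =>
          θ (1 : M) i ≠ (1 : Equiv.Perm (Fin n)) i).card := by
      rw [← card_filter_prod (fun (_q : G ⧸ M) (i : Fin n) =>
        θ (1 : M) i ≠ (1 : Equiv.Perm (Fin n)) i)]
      congr 1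
      apply Finset.filter_congr
      intro x _
      exact hpt x
    have hone : ((Finset.univ.filter fun i : Fin n =>
        θ (1 : M) i ≠ (1 : Equiv.Perm (Fin n)) i).card : ℝ) < ε * n := by
      have := h2 (Finset.mem_insert_self _ _)
      unfold permHammingDist at this
      exact (div_lt_iff₀ hn0).mp this
    calc ((Finset.univ.filter fun x : (G ⧸ M) × Fin n =>
        SoficAux.skew M θ 1 x ≠ (1 : Equiv.Perm ((G ⧸ M) × Fin n)) x).card : ℝ)
        = ∑ _q : G ⧸ M, ((Finset.univ.filter fun i : Fin n =>
          θ (1 : M) i ≠ (1 : Equiv.Perm (Fin n)) i).card : ℝ) := by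
          rw [hcount]; push_cast; ring
      _ < ∑ _q : G ⧸ M, ε * n :=
          Finset.sum_lt_sum_of_nonempty Finset.univ_nonempty (fun q _ => hone)
      _ = ε * m := by
          rw [Finset.sum_const, Finset.card_univ, nsmul_eq_mul, hm]
          push_cast
          ring
  · -- separation
    intro x y hx hy hxy
    beta_reduce
    rw [hdist, le_div_iff₀ hm0]
    by_cases hqxy : (QuotientGroup.mk x : G ⧸ M) = QuotientGroup.mk y
    · have hpt : ∀ z : (G ⧸ M) × Fin n,
          (SoficAux.skew M θ x z ≠ SoficAux.skew M θ y z)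
            ↔ (θ (SoficAux.coc M z.1 x) z.2 ≠ θ (SoficAux.coc M z.1 y) z.2) := by
        rintro ⟨q, i⟩
        simp [SoficAux.skew_apply, Prod.ext_iff, hqxy]
      have hcount : (Finset.univ.filter fun z : (G ⧸ M) × Fin n =>
          SoficAux.skew M θ x z ≠ SoficAux.skew M θ y z).card
        = ∑ q : G ⧸ M, (Finset.univ.filter fun i : Fin n =>
            θ (SoficAux.coc M q x) i ≠ θ (SoficAux.coc M q y) i).card := by
        rw [← card_filter_prod (fun (q : G ⧸ M) (i : Fin n) =>
          θ (SoficAux.coc M q x) i ≠ θ (SoficAux.coc M q y) i)]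
        congr 1
        apply Finset.filter_congr
        intro z _
        exact hpt z
      have hq : ∀ q : G ⧸ M, 1 / 4 * (n : ℝ) ≤ ((Finset.univ.filter fun i : Fin n =>
          θ (SoficAux.coc M q x) i ≠ θ (SoficAux.coc M q y) i).card : ℝ) := by
        intro q
        have hne : SoficAux.coc M q x ≠ SoficAux.coc M q y :=
          fun hc => hxy (SoficAux.coc_inj M hqxy hc)
        have := h3 _ _ (hmem _ _ hx) (hmem _ _ hy) hne
        unfold permHammingDist at this
        exact (le_div_iff₀ hn0).mp this
      calc (1 / 4 : ℝ) * m = ∑ _q : G ⧸ M, 1 / 4 * (n : ℝ) := by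
            rw [Finset.sum_const, Finset.card_univ, nsmul_eq_mul, hm]
            push_cast
            ring
        _ ≤ ∑ q : G ⧸ M, ((Finset.univ.filter fun i : Fin n =>
            θ (SoficAux.coc M q x) i ≠ θ (SoficAux.coc M q y) i).card : ℝ) :=
            Finset.sum_le_sum (fun q _ => hq q)
        _ = ((Finset.univ.filter fun z : (G ⧸ M) × Fin n =>
            SoficAux.skew M θ x z ≠ SoficAux.skew M θ y z).card : ℝ) := by
            rw [hcount]; push_cast; ring
    · have hfull : (Finset.univ.filter fun z : (G ⧸ M) × Fin n =>
          SoficAux.skew M θ x z ≠ SoficAux.skew M θ y z) = Finset.univ := by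
        ext ⟨q, i⟩
        simp only [Finset.mem_filter, Finset.mem_univ, true_and, iff_true,
          SoficAux.skew_apply, ne_eq, Prod.mk.injEq, not_and]
        intro hfst
        exact absurd (mul_right_cancel hfst) hqxy
      rw [hfull, Finset.card_univ, ← hmdef]
      linarith [hm0]

/-- A group is minimal non-sofic if it is not sofic but every proper subgroup is sofic. -/
def IsMinimalNonSofic (G : Type*) [Group G] : Prop :=
  ¬ IsSofic G ∧ ∀ H : Subgroup G, H ≠ ⊤ → IsSofic H

/-- `M` is a maximal normal subgroup of `G`: a proper normal subgroup that is maximal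
with respect to inclusion among proper normal subgroups. -/
def IsMaximalNormal {G : Type*} [Group G] (M : Subgroup G) : Prop :=
  M.Normal ∧ M ≠ ⊤ ∧ ∀ N : Subgroup G, N.Normal → N ≠ ⊤ → M ≤ N → N = M

/-- Every minimal non-sofic group has a maximal normal subgroup `M` such that `G/M`
is a finitely generated infinite simple group. -/
theorem minimalNonSofic_has_maximalNormal_simple_quotient (G : Type*) [Group G]
    (hG : IsMinimalNonSofic G) :
    ∃ M : Subgroup G, ∃ _ : M.Normal, IsMaximalNormal M ∧
      Group.FG (G ⧸ M) ∧ Infinite (G ⧸ M) ∧ IsSimpleGroup (G ⧸ M) := by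
  classical
  obtain ⟨hns, hmin⟩ := hG
  have hInf : Infinite G := by
    by_contra hfin
    rw [not_infinite_iff_finite] at hfin
    exact hns (isSofic_of_finite G)
  have hnt : Nontrivial G := inferInstance
  have hFG : Group.FG G := by
    by_contra hfg
    apply hns
    intro F ε hε
    have hne : Subgroup.closure (↑F : Set G) ≠ ⊤ := by
      intro htop
      exact hfg (Group.fg_iff.mpr ⟨↑F, htop, F.finite_toSet⟩)
    exact sofic_cond_of_subgroup _ (hmin _ hne) F
      (fun g hg => Subgroup.subset_closure hg) ε hε
  obtain ⟨S, hScl, hSfin⟩ := Group.fg_iff.mp hFG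
  -- Zorn's lemma: existence of a maximal proper normal subgroup
  have hub : ∀ c ⊆ {N : Subgroup G | N.Normal ∧ N ≠ ⊤}, IsChain (· ≤ ·) c →
      ∀ y ∈ c, ∃ ub ∈ {N : Subgroup G | N.Normal ∧ N ≠ ⊤}, ∀ z ∈ c, z ≤ ub := by
    intro c hcS hchain y hy
    have hdir : DirectedOn (· ≤ ·) c := hchain.directedOn
    have hmem : ∀ x : G, x ∈ sSup c ↔ ∃ N ∈ c, x ∈ N :=
      fun x => Subgroup.mem_sSup_of_directedOn ⟨y, hy⟩ hdir
    refine ⟨sSup c, ⟨⟨?_⟩, ?_⟩, fun z hz => le_sSup hz⟩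
    · intro a ha g
      rw [hmem] at ha ⊢
      obtain ⟨N, hN, haN⟩ := ha
      exact ⟨N, hN, (hcS hN).1.conj_mem a haN g⟩
    · intro htop
      have hsingle : ∀ T : Finset G, ∃ N ∈ c, ∀ g ∈ T, g ∈ N := by
        intro T
        induction T using Finset.induction_on with
        | empty => exact ⟨y, hy, by simp⟩
        | insert a s ha ih =>
          obtain ⟨N, hN, hNT⟩ := ih
          obtain ⟨N', hN', haN'⟩ := (hmem _).mp (htop ▸ Subgroup.mem_top _)
          obtain ⟨P, hP, hNP, hN'P⟩ := hdir N hN N' hN'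
          refine ⟨P, hP, fun g hg => ?_⟩
          rcases Finset.mem_insert.mp hg with rfl | hg
          · exact hN'P haN'
          · exact hNP (hNT g hg)
      obtain ⟨N, hN, hSN⟩ := hsingle hSfin.toFinset
      have htopN : (⊤ : Subgroup G) ≤ N := by
        rw [← hScl]
        refine (Subgroup.closure_le N).mpr ?_
        intro x hx
        exact hSN x (hSfin.mem_toFinset.mpr hx)
      exact (hcS hN).2 (top_le_iff.mp htopN)
  obtain ⟨Mx, -, hMmax⟩ := zorn_le_nonempty₀ {N : Subgroup G | N.Normal ∧ N ≠ ⊤} hub ⊥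
    ⟨inferInstance, bot_ne_top⟩
  haveI hMnorm : Mx.Normal := hMmax.1.1
  have hMne : Mx ≠ ⊤ := hMmax.1.2
  have hmaxN : ∀ N : Subgroup G, N.Normal → N ≠ ⊤ → Mx ≤ N → N = Mx :=
    fun N hN hNt hMN => le_antisymm (hMmax.2 ⟨hN, hNt⟩ hMN) hMN
  haveI : Group.FG G := hFG
  have hFGQ : Group.FG (G ⧸ Mx) := inferInstance
  have hInfQ : Infinite (G ⧸ Mx) := by
    by_contra hq
    rw [not_infinite_iff_finite] at hq
    exact hns (isSofic_of_normal_finite_quotient Mx (hmin Mx hMne) hq)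
  haveI hnontrivQ : Nontrivial (G ⧸ Mx) := by
    have : ∃ g : G, g ∉ Mx := by
      by_contra hall
      push_neg at hall
      exact hMne ((Subgroup.eq_top_iff' Mx).mpr hall)
    obtain ⟨g, hg⟩ := this
    exact ⟨QuotientGroup.mk g, 1, fun h => hg ((QuotientGroup.eq_one_iff g).mp h)⟩
  have hsimple : IsSimpleGroup (G ⧸ Mx) := by
    constructor
    intro N hN
    have hN'norm : (N.comap (QuotientGroup.mk' Mx)).Normal := hN.comap _
    have hMleN' : Mx ≤ N.comap (QuotientGroup.mk' Mx) := by
      intro a ha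
      show QuotientGroup.mk' Mx a ∈ N
      have h1 : QuotientGroup.mk' Mx a = 1 := by
        rw [← MonoidHom.mem_ker, QuotientGroup.ker_mk']
        exact ha
      rw [h1]
      exact N.one_mem
    have hmc := Subgroup.map_comap_eq_self_of_surjective
      (QuotientGroup.mk'_surjective Mx) N
    by_cases hN'top : N.comap (QuotientGroup.mk' Mx) = ⊤
    · right
      rw [← hmc, hN'top]
      exact Subgroup.map_top_of_surjective _ (QuotientGroup.mk'_surjective Mx)
    · left
      have hN'M : N.comap (QuotientGroup.mk' Mx) = Mx := hmaxN _ hN'norm hN'top hMleN'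
      rw [← hmc, hN'M]
      exact QuotientGroup.map_mk'_self Mx
  exact ⟨Mx, hMnorm, ⟨hMnorm, hMne, hmaxN⟩, hFGQ, hInfQ, hsimple⟩
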